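/- arXiv:2209.05875 — 2 statements merged into one kernel-verified Lean document; each statement's English description precedes it below -/
import Mathlib

section
/- Let n be a natural number and let X, Y be nonzero n×n complex matrices. Then sin² Θ(|X*|,|Y*|) + sin² Θ(|X|,|Y|) ≤ 2 sin² Θ(X,Y). -/
open Matrix
open scoped ComplexOrder

/-- Hilbert–Schmidt (Frobenius) norm: ‖X‖₂ = √(Re Tr(XᴴX)). -/
noncomputable def hsNorm {n : ℕ} (X : Matrix (Fin n) (Fin n) ℂ) : ℝ :=
  Real.sqrt ((Matrix.trace (Xᴴ * X)).re)

/-- Angle Θ(X,Y) = arccos(Re Tr(YᴴX) / (‖X‖₂‖Y‖₂)). -/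
noncomputable def theta {n : ℕ} (X Y : Matrix (Fin n) (Fin n) ℂ) : ℝ :=
  Real.arccos ((Matrix.trace (Yᴴ * X)).re / (hsNorm X * hsNorm Y))

/-- |X| : the positive semidefinite square root of XᴴX. -/
noncomputable def matAbs {n : ℕ} (X : Matrix (Fin n) (Fin n) ℂ) : Matrix (Fin n) (Fin n) ℂ :=
  (Matrix.posSemidef_conjTranspose_mul_self X).1.eigenvectorUnitary.1 *
    diagonal ((↑) ∘ Real.sqrt ∘ (Matrix.posSemidef_conjTranspose_mul_self X).1.eigenvalues) *
    (star (Matrix.posSemidef_conjTranspose_mul_self X).1.eigenvectorUnitary : Matrix (Fin n) (Fin n) ℂ)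

section PortHelpers
open scoped MatrixOrder

noncomputable def psdSqrt {m : Type*} [Fintype m] [DecidableEq m] (A : Matrix m m ℂ) :
    Matrix m m ℂ := CFC.sqrt A

lemma psd_sqrt_psd {m : Type*} [Fintype m] [DecidableEq m] {A : Matrix m m ℂ}
    (hA : A.PosSemidef) : (psdSqrt A).PosSemidef := (CFC.sqrt_nonneg A).posSemidef

lemma psd_sqrt_mul_self {m : Type*} [Fintype m] [DecidableEq m] {A : Matrix m m ℂ}
    (hA : A.PosSemidef) : psdSqrt A * psdSqrt A = A := CFC.sqrt_mul_sqrt_self A hA.nonneg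

lemma matAbs_psd_aux {n : ℕ} (X : Matrix (Fin n) (Fin n) ℂ) : (matAbs X).PosSemidef := by
  have hd : (0 : Fin n → ℂ) ≤ ((↑) ∘ Real.sqrt ∘
      (Matrix.posSemidef_conjTranspose_mul_self X).1.eigenvalues) := by
    intro i
    simp only [Pi.zero_apply, Function.comp_apply]
    exact Complex.zero_le_real.mpr (Real.sqrt_nonneg _)
  have := (Matrix.PosSemidef.diagonal hd).mul_mul_conjTranspose_same
    ((Matrix.posSemidef_conjTranspose_mul_self X).1.eigenvectorUnitary : Matrix (Fin n) (Fin n) ℂ)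
  exact this

lemma matAbs_mul_self_aux {n : ℕ} (X : Matrix (Fin n) (Fin n) ℂ) :
    matAbs X * matAbs X = Xᴴ * X := by
  have hspec := (Matrix.posSemidef_conjTranspose_mul_self X).1.spectral_theorem
  rw [Unitary.conjStarAlgAut_apply] at hspec
  have hU := Unitary.coe_star_mul_self (Matrix.posSemidef_conjTranspose_mul_self X).1.eigenvectorUnitary
  conv_rhs => rw [hspec]
  unfold matAbs
  rw [show ∀ A B C : Matrix (Fin n) (Fin n) ℂ, A * B * C * (A * B * C) = A * (B * (C * A) * B) * C by
    intro A B C; simp only [Matrix.mul_assoc], hU, Matrix.mul_one, Matrix.diagonal_mul_diagonal]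
  congr 3
  funext i
  simp only [Function.comp_apply]
  rw [← Complex.ofReal_mul, Real.mul_self_sqrt
    ((Matrix.posSemidef_conjTranspose_mul_self X).eigenvalues_nonneg i)]
  rfl

lemma eq_matAbs_of_sq_eq {n : ℕ} {P : Matrix (Fin n) (Fin n) ℂ} (hP : P.PosSemidef)
    (X : Matrix (Fin n) (Fin n) ℂ) (h : P ^ 2 = Xᴴ * X) : P = matAbs X := by
  rw [← CFC.sqrt_unique (pow_two P ▸ h) hP.nonneg,
    CFC.sqrt_unique (matAbs_mul_self_aux X) (matAbs_psd_aux X).nonneg]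

end PortHelpers


lemma trace_re_nonneg {m : Type*} [Fintype m] [DecidableEq m] {A : Matrix m m ℂ}
    (hA : A.PosSemidef) : 0 ≤ A.trace.re := by
  have h : ∀ i, 0 ≤ (A i i).re := by
    intro i
    have := hA.dotProduct_mulVec_nonneg (Pi.single i 1)
    simp [dotProduct, mulVec, Pi.single_apply] at this
    exact (Complex.le_def.mp this).1
  simpa [Matrix.trace, Matrix.diag, Complex.re_sum] using Finset.sum_nonneg fun i _ => h i

lemma trace_mul_re_nonneg {m : Type*} [Fintype m] [DecidableEq m] {A B : Matrix m m ℂ}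
    (hA : A.PosSemidef) (hB : B.PosSemidef) : 0 ≤ (A * B).trace.re := by
  have h0 : A * B = A * (psdSqrt B * psdSqrt B) := by rw [psd_sqrt_mul_self hB]
  rw [h0, ← Matrix.mul_assoc, Matrix.trace_mul_cycle]
  apply trace_re_nonneg
  have := hA.conjTranspose_mul_mul_same (psdSqrt B)
  rwa [(psd_sqrt_psd hB).1.eq] at this

lemma trace_cs {n : ℕ} (A B : Matrix (Fin n) (Fin n) ℂ) :
    |(Matrix.trace (Bᴴ * A)).re| ≤ hsNorm A * hsNorm B := by
  classical
  set vA : EuclideanSpace ℂ (Fin n × Fin n) :=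
    (WithLp.equiv 2 _).symm (fun p => A p.1 p.2) with hvA
  set vB : EuclideanSpace ℂ (Fin n × Fin n) :=
    (WithLp.equiv 2 _).symm (fun p => B p.1 p.2) with hvB
  have hnorm : ∀ (C : Matrix (Fin n) (Fin n) ℂ),
      ‖((WithLp.equiv 2 _).symm (fun p => C p.1 p.2) : EuclideanSpace ℂ (Fin n × Fin n))‖
        = hsNorm C := by
    intro C
    rw [EuclideanSpace.norm_eq, hsNorm]
    congr 1
    simp [Matrix.trace, Matrix.diag, Matrix.mul_apply, Complex.re_sum,
      Fintype.sum_prod_type, Matrix.conjTranspose_apply, ← Complex.normSq_eq_norm_sq,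
      Complex.normSq_apply, Complex.mul_re]
    rw [Finset.sum_comm]
  have hinner : (inner ℂ vB vA) = Matrix.trace (Bᴴ * A) := by
    simp [hvA, hvB, PiLp.inner_apply, Matrix.trace, Matrix.diag, Matrix.mul_apply,
      Matrix.conjTranspose_apply, Fintype.sum_prod_type, RCLike.inner_apply, mul_comm]
    rw [Finset.sum_comm]
  calc |(Matrix.trace (Bᴴ * A)).re| = |(inner ℂ vB vA).re| := by rw [hinner]
    _ ≤ ‖(inner ℂ vB vA)‖ := Complex.abs_re_le_norm _
    _ ≤ ‖vB‖ * ‖vA‖ := norm_inner_le_norm _ _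
    _ = hsNorm A * hsNorm B := by rw [hvA, hvB, hnorm, hnorm]; ring

lemma polar {n : ℕ} (X : Matrix (Fin n) (Fin n) ℂ) :
    ∃ U : Matrix (Fin n) (Fin n) ℂ, U * matAbs X = X ∧ X * Uᴴ = matAbs Xᴴ := by
  classical
  set hH := Matrix.posSemidef_conjTranspose_mul_self X with hhH
  set W : Matrix (Fin n) (Fin n) ℂ := (hH.1.eigenvectorUnitary : Matrix (Fin n) (Fin n) ℂ) with hWdef
  set lam : Fin n → ℝ := hH.1.eigenvalues with hlamdef
  have hlam0 : ∀ i, 0 ≤ lam i := fun i => hH.eigenvalues_nonneg i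
  have hWW : W * Wᴴ = 1 := by
    simpa [Matrix.star_eq_conjTranspose] using
      Matrix.mem_unitaryGroup_iff.mp (hH.1.eigenvectorUnitary).2
  have hWW' : Wᴴ * W = 1 := by
    simpa [Matrix.star_eq_conjTranspose] using
      Matrix.mem_unitaryGroup_iff'.mp (hH.1.eigenvectorUnitary).2
  set K : Matrix (Fin n) (Fin n) ℂ := X * W with hKdef
  have hKK : Kᴴ * K = Matrix.diagonal (fun i => (lam i : ℂ)) := by
    have h : star W * (Xᴴ * X) * W = Matrix.diagonal (RCLike.ofReal ∘ lam) := by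
      have := hH.1.conjStarAlgAut_star_eigenvectorUnitary
      simpa using this
    calc Kᴴ * K = (star W) * (Xᴴ * X) * W := by
          simp [hKdef, Matrix.conjTranspose_mul, Matrix.star_eq_conjTranspose, Matrix.mul_assoc]
      _ = Matrix.diagonal (fun i => (lam i : ℂ)) := by rw [h]; rfl
  have hKKT : K * Kᴴ = X * Xᴴ := by
    calc K * Kᴴ = X * (W * Wᴴ) * Xᴴ := by
          simp [hKdef, Matrix.conjTranspose_mul, Matrix.mul_assoc]
      _ = X * Xᴴ := by rw [hWW, Matrix.mul_one]
  set e : Fin n → ℂ := fun i => if lam i = 0 then 0 else 1 with hedef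
  -- K * diagonal e = K
  have hKe : K * Matrix.diagonal e = K := by
    have h1 : K * Matrix.diagonal e - K = K * Matrix.diagonal (fun i => e i - 1) := by
      have h2 : Matrix.diagonal (fun i => e i - 1) = Matrix.diagonal e - 1 := by
        rw [← Matrix.diagonal_one, ← Matrix.diagonal_sub]
      rw [h2, mul_sub, mul_one]
    have hz : (K * Matrix.diagonal (fun i => e i - 1))ᴴ * (K * Matrix.diagonal (fun i => e i - 1)) = 0 := by
      rw [Matrix.conjTranspose_mul, Matrix.diagonal_conjTranspose, Matrix.mul_assoc,
        ← Matrix.mul_assoc Kᴴ, hKK, Matrix.diagonal_mul_diagonal, Matrix.diagonal_mul_diagonal]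
      rw [← Matrix.diagonal_zero]
      congr 1
      funext i
      by_cases hi : lam i = 0 <;> simp [hedef, hi]
    have h3 := Matrix.conjTranspose_mul_self_eq_zero.mp hz
    rw [← h1] at h3
    exact sub_eq_zero.mp h3
  have hXW : K * Wᴴ = X := by rw [hKdef, Matrix.mul_assoc, hWW, Matrix.mul_one]
  set g : Fin n → ℂ := fun i => ((if lam i = 0 then 0 else (Real.sqrt (lam i))⁻¹ : ℝ) : ℂ) with hgdef
  set s : Fin n → ℂ := fun i => ((Real.sqrt (lam i)) : ℂ) with hsdef
  have hAbs : matAbs X = W * Matrix.diagonal s * Wᴴ := rfl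
  have hgs : (fun i => g i * s i) = e := by
    funext i
    by_cases hi : lam i = 0
    · simp [hgdef, hsdef, hedef, hi]
    · have hpos : 0 < lam i := lt_of_le_of_ne (hlam0 i) (Ne.symm hi)
      have hs : Real.sqrt (lam i) ≠ 0 := ne_of_gt (Real.sqrt_pos.mpr hpos)
      simp only [hgdef, hsdef, hedef, if_neg hi]
      rw [← Complex.ofReal_mul, inv_mul_cancel₀ hs, Complex.ofReal_one]
  refine ⟨K * Matrix.diagonal g * Wᴴ, ?_, ?_⟩
  · -- U * matAbs X = X
    rw [hAbs]
    calc K * Matrix.diagonal g * Wᴴ * (W * Matrix.diagonal s * Wᴴ)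
        = K * Matrix.diagonal g * (Wᴴ * W) * Matrix.diagonal s * Wᴴ := by
          simp only [Matrix.mul_assoc]
      _ = K * (Matrix.diagonal g * Matrix.diagonal s) * Wᴴ := by
          rw [hWW']; simp only [Matrix.mul_one, Matrix.mul_assoc]
      _ = K * Matrix.diagonal e * Wᴴ := by rw [Matrix.diagonal_mul_diagonal, hgs]
      _ = X := by rw [hKe, hXW]
  · -- X * Uᴴ = matAbs Xᴴ
    have hgstar : star g = g := by
      funext i; simp [hgdef, Complex.conj_ofReal]
    have hUT : (K * Matrix.diagonal g * Wᴴ)ᴴ = W * Matrix.diagonal g * Kᴴ := by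
      simp only [Matrix.conjTranspose_mul, Matrix.conjTranspose_conjTranspose,
        Matrix.diagonal_conjTranspose, hgstar, Matrix.mul_assoc]
    rw [hUT]
    have hXP : X * (W * Matrix.diagonal g * Kᴴ) = K * Matrix.diagonal g * Kᴴ := by
      rw [← hXW]
      calc K * Wᴴ * (W * Matrix.diagonal g * Kᴴ)
          = K * (Wᴴ * W) * (Matrix.diagonal g * Kᴴ) := by simp only [Matrix.mul_assoc]
        _ = K * Matrix.diagonal g * Kᴴ := by rw [hWW']; simp only [Matrix.mul_one, Matrix.mul_assoc]
    rw [hXP]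
    set P : Matrix (Fin n) (Fin n) ℂ := K * Matrix.diagonal g * Kᴴ with hPdef
    have hg0 : 0 ≤ g := by
      intro i
      simp only [Pi.zero_apply, hgdef]
      rw [Complex.zero_le_real]
      by_cases hi : lam i = 0 <;> simp [hi]
    have hPsd : P.PosSemidef := (Matrix.PosSemidef.diagonal hg0).mul_mul_conjTranspose_same K
    have hgg : (fun i => g i * ((lam i : ℂ) * g i)) = e := by
      funext i
      by_cases hi : lam i = 0
      · simp [hgdef, hedef, hi]
      · have hpos : 0 < lam i := lt_of_le_of_ne (hlam0 i) (Ne.symm hi)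
        simp only [hgdef, hedef, if_neg hi]
        rw [← Complex.ofReal_mul, ← Complex.ofReal_mul]
        rw [show (Real.sqrt (lam i))⁻¹ * (lam i * (Real.sqrt (lam i))⁻¹)
            = lam i / (Real.sqrt (lam i) * Real.sqrt (lam i)) by ring]
        rw [Real.mul_self_sqrt (hlam0 i), div_self hi, Complex.ofReal_one]
    have hP2 : P ^ 2 = (Xᴴ)ᴴ * Xᴴ := by
      rw [Matrix.conjTranspose_conjTranspose]
      calc P ^ 2 = K * Matrix.diagonal g * ((Kᴴ * K) * (Matrix.diagonal g * Kᴴ)) := by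
            rw [pow_two, hPdef]; simp only [Matrix.mul_assoc]
        _ = K * (Matrix.diagonal g * (Matrix.diagonal (fun i => (lam i : ℂ)) * Matrix.diagonal g)) * Kᴴ := by
            rw [hKK]; simp only [Matrix.mul_assoc]
        _ = K * Matrix.diagonal e * Kᴴ := by
            rw [Matrix.diagonal_mul_diagonal, Matrix.diagonal_mul_diagonal, hgg]
        _ = X * Xᴴ := by rw [hKe, hKKT]
    exact eq_matAbs_of_sq_eq hPsd _ hP2

lemma matAbs_psd {n : ℕ} (X : Matrix (Fin n) (Fin n) ℂ) : (matAbs X).PosSemidef :=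
  matAbs_psd_aux X

lemma matAbs_herm {n : ℕ} (X : Matrix (Fin n) (Fin n) ℂ) : (matAbs X)ᴴ = matAbs X :=
  (matAbs_psd X).1

lemma matAbs_mul_self {n : ℕ} (X : Matrix (Fin n) (Fin n) ℂ) :
    matAbs X * matAbs X = Xᴴ * X :=
  matAbs_mul_self_aux X

lemma matAbs_neg {n : ℕ} (X : Matrix (Fin n) (Fin n) ℂ) : matAbs (-X) = matAbs X := by
  refine eq_matAbs_of_sq_eq (matAbs_psd (-X)) _ ?_
  rw [pow_two, matAbs_mul_self]
  simp

lemma blockPsd {n : ℕ} (X : Matrix (Fin n) (Fin n) ℂ) :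
    (Matrix.fromBlocks (matAbs Xᴴ) X Xᴴ (matAbs X)).PosSemidef := by
  obtain ⟨U, hU1, hU2⟩ := polar X
  set S := psdSqrt (matAbs X) with hSdef
  have hSS : S * S = matAbs X := psd_sqrt_mul_self (matAbs_psd X)
  have hSh : Sᴴ = S := (psd_sqrt_psd (matAbs_psd X)).1
  have e11 : matAbs Xᴴ = U * S * (S * Uᴴ) + 0ᴴ * 0 := by
    rw [Matrix.conjTranspose_zero, Matrix.zero_mul, add_zero]
    calc matAbs Xᴴ = X * Uᴴ := hU2.symm
      _ = U * (S * S) * Uᴴ := by rw [hSS, hU1]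
      _ = U * S * (S * Uᴴ) := by simp only [Matrix.mul_assoc]
  have e12 : X = U * S * S + 0ᴴ * 0 := by
    rw [Matrix.conjTranspose_zero, Matrix.zero_mul, add_zero]
    calc X = U * (S * S) := by rw [hSS, hU1]
      _ = U * S * S := by simp only [Matrix.mul_assoc]
  have e21 : Xᴴ = S * (S * Uᴴ) + 0ᴴ * 0 := by
    rw [Matrix.conjTranspose_zero, Matrix.zero_mul, add_zero]
    calc Xᴴ = (U * (S * S))ᴴ := by rw [hSS, hU1]
      _ = S * (S * Uᴴ) := by
          simp only [Matrix.conjTranspose_mul, hSh, Matrix.mul_assoc]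
  have e22 : matAbs X = S * S + 0ᴴ * 0 := by
    rw [Matrix.conjTranspose_zero, Matrix.zero_mul, add_zero]
    exact hSS.symm
  have hC : Matrix.fromBlocks (matAbs Xᴴ) X Xᴴ (matAbs X)
      = (Matrix.fromBlocks (S * Uᴴ) S 0 0)ᴴ * Matrix.fromBlocks (S * Uᴴ) S 0 0 := by
    rw [Matrix.fromBlocks_conjTranspose, Matrix.fromBlocks_multiply,
      Matrix.conjTranspose_mul, hSh, Matrix.conjTranspose_conjTranspose, ← e11, ← e12, ← e21, ← e22]
  rw [hC]
  exact Matrix.posSemidef_conjTranspose_mul_self _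

lemma trace_fromBlocks {m : Type*} [Fintype m] (A : Matrix m m ℂ) (B C : Matrix m m ℂ)
    (D : Matrix m m ℂ) : (Matrix.fromBlocks A B C D).trace = A.trace + D.trace := by
  simp [Matrix.trace, Matrix.diag, Fintype.sum_sum_type]

lemma key_aux {n : ℕ} (X Y : Matrix (Fin n) (Fin n) ℂ) :
    0 ≤ (Matrix.trace (matAbs Xᴴ * matAbs Yᴴ)).re + (Matrix.trace (matAbs X * matAbs Y)).re
      + 2 * (Matrix.trace (Yᴴ * X)).re := by
  have h := trace_mul_re_nonneg (blockPsd X) (blockPsd Y)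
  rw [Matrix.fromBlocks_multiply, trace_fromBlocks, Matrix.trace_add, Matrix.trace_add] at h
  have h1 : (Matrix.trace (X * Yᴴ)).re = (Matrix.trace (Yᴴ * X)).re := by
    rw [Matrix.trace_mul_comm]
  have h2 : (Matrix.trace (Xᴴ * Y)).re = (Matrix.trace (Yᴴ * X)).re := by
    have : Xᴴ * Y = (Yᴴ * X)ᴴ := by
      rw [Matrix.conjTranspose_mul, Matrix.conjTranspose_conjTranspose]
    rw [this, Matrix.trace_conjTranspose]
    exact Complex.conj_re _
  simp only [Complex.add_re] at h
  linarith

lemma key {n : ℕ} (X Y : Matrix (Fin n) (Fin n) ℂ) :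
    2 * |(Matrix.trace (Yᴴ * X)).re| ≤
      (Matrix.trace (matAbs Xᴴ * matAbs Yᴴ)).re + (Matrix.trace (matAbs X * matAbs Y)).re := by
  rcases abs_cases (Matrix.trace (Yᴴ * X)).re with ⟨h, _⟩ | ⟨h, _⟩
  · have := key_aux (-X) Y
    rw [matAbs_neg] at this
    have hneg : (-X)ᴴ = -(Xᴴ) := by simp
    rw [hneg, matAbs_neg] at this
    simp only [Matrix.mul_neg, Matrix.trace_neg, Complex.neg_re] at this
    rw [h]; linarith
  · have := key_aux X Y
    rw [h]; linarith

lemma hsNorm_nonneg {n : ℕ} (X : Matrix (Fin n) (Fin n) ℂ) : 0 ≤ hsNorm X :=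
  Real.sqrt_nonneg _

lemma hsNorm_eq {n : ℕ} (C : Matrix (Fin n) (Fin n) ℂ) :
    hsNorm C = ‖((WithLp.equiv 2 _).symm (fun p => C p.1 p.2) :
      EuclideanSpace ℂ (Fin n × Fin n))‖ := by
  rw [EuclideanSpace.norm_eq, hsNorm]
  congr 1
  simp [Matrix.trace, Matrix.diag, Matrix.mul_apply, Complex.re_sum,
    Fintype.sum_prod_type, Matrix.conjTranspose_apply, ← Complex.normSq_eq_norm_sq,
    Complex.normSq_apply, Complex.mul_re]
  rw [Finset.sum_comm]

lemma hsNorm_pos {n : ℕ} {X : Matrix (Fin n) (Fin n) ℂ} (hX : X ≠ 0) : 0 < hsNorm X := by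
  rw [hsNorm_eq, norm_pos_iff]
  intro h
  apply hX
  ext i j
  have := congrArg (fun v => v (i, j)) h
  simpa using this

lemma hsNorm_conjTranspose {n : ℕ} (X : Matrix (Fin n) (Fin n) ℂ) : hsNorm Xᴴ = hsNorm X := by
  simp only [hsNorm, Matrix.conjTranspose_conjTranspose]
  rw [Matrix.trace_mul_comm]

lemma hsNorm_matAbs {n : ℕ} (X : Matrix (Fin n) (Fin n) ℂ) : hsNorm (matAbs X) = hsNorm X := by
  simp only [hsNorm, matAbs_herm, matAbs_mul_self]

theorem stmt_10 {n : ℕ} (X Y : Matrix (Fin n) (Fin n) ℂ) (hX : X ≠ 0) (hY : Y ≠ 0) :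
    Real.sin (theta (matAbs Xᴴ) (matAbs Yᴴ)) ^ 2 + Real.sin (theta (matAbs X) (matAbs Y)) ^ 2 ≤
      2 * Real.sin (theta X Y) ^ 2 := by
  set N : ℝ := hsNorm X * hsNorm Y with hNdef
  have hN : 0 < N := mul_pos (hsNorm_pos hX) (hsNorm_pos hY)
  set a : ℝ := (Matrix.trace (matAbs X * matAbs Y)).re with hadef
  set b : ℝ := (Matrix.trace (matAbs Xᴴ * matAbs Yᴴ)).re with hbdef
  set c : ℝ := (Matrix.trace (Yᴴ * X)).re with hcdef
  have hEc : theta X Y = Real.arccos (c / N) := rfl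
  have hEa : theta (matAbs X) (matAbs Y) = Real.arccos (a / N) := by
    rw [theta, matAbs_herm, hsNorm_matAbs, hsNorm_matAbs, Matrix.trace_mul_comm]
  have hEb : theta (matAbs Xᴴ) (matAbs Yᴴ) = Real.arccos (b / N) := by
    rw [theta, matAbs_herm, hsNorm_matAbs, hsNorm_matAbs, hsNorm_conjTranspose,
      hsNorm_conjTranspose, Matrix.trace_mul_comm]
  have ha0 : 0 ≤ a := by
    rw [hadef, Matrix.trace_mul_comm]
    exact trace_mul_re_nonneg (matAbs_psd Y) (matAbs_psd X)
  have hb0 : 0 ≤ b := by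
    rw [hbdef, Matrix.trace_mul_comm]
    exact trace_mul_re_nonneg (matAbs_psd Yᴴ) (matAbs_psd Xᴴ)
  have hcs_c : |c| ≤ N := trace_cs X Y
  have hcs_a : |a| ≤ N := by
    have h := trace_cs (matAbs X) (matAbs Y)
    rw [matAbs_herm, hsNorm_matAbs, hsNorm_matAbs, Matrix.trace_mul_comm] at h
    exact h
  have hcs_b : |b| ≤ N := by
    have h := trace_cs (matAbs Xᴴ) (matAbs Yᴴ)
    rw [matAbs_herm, hsNorm_matAbs, hsNorm_matAbs, hsNorm_conjTranspose, hsNorm_conjTranspose,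
      Matrix.trace_mul_comm] at h
    exact h
  have hkey : 2 * |c| ≤ b + a := key X Y
  have hsin : ∀ t : ℝ, |t| ≤ 1 → Real.sin (Real.arccos t) ^ 2 = 1 - t ^ 2 := by
    intro t ht
    rw [Real.sin_arccos, Real.sq_sqrt]
    have := abs_le.mp ht
    nlinarith
  have hta : |a / N| ≤ 1 := by
    rw [abs_div, abs_of_pos hN]; exact (div_le_one hN).mpr hcs_a
  have htb : |b / N| ≤ 1 := by
    rw [abs_div, abs_of_pos hN]; exact (div_le_one hN).mpr hcs_b
  have htc : |c / N| ≤ 1 := by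
    rw [abs_div, abs_of_pos hN]; exact (div_le_one hN).mpr hcs_c
  rw [hEa, hEb, hEc, hsin _ hta, hsin _ htb, hsin _ htc]
  have hmain : 2 * c ^ 2 ≤ a ^ 2 + b ^ 2 := by
    have h4 : (2 * |c|) ^ 2 ≤ (b + a) ^ 2 := by
      apply pow_le_pow_left₀ (by positivity) hkey
    nlinarith [h4, sq_nonneg (a - b), sq_abs c]
  have hN2 : (0:ℝ) < N ^ 2 := by positivity
  have h5 : (a / N) ^ 2 + (b / N) ^ 2 - 2 * (c / N) ^ 2 = (a ^ 2 + b ^ 2 - 2 * c ^ 2) / N ^ 2 := by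
    field_simp
  have h6 : 0 ≤ (a ^ 2 + b ^ 2 - 2 * c ^ 2) / N ^ 2 :=
    div_nonneg (by linarith) (le_of_lt hN2)
  linarith
end

section
/- Let n be a natural number and let X, Y be n×n complex matrices. Then ‖|X| − |Y|‖₂ ≤ √2 · ‖X − Y‖₂. -/
open Matrix
open scoped ComplexOrder

namespace AY

variable {m : Type*} [Fintype m] [DecidableEq m]
variable {m' : Type*} [Fintype m'] [DecidableEq m']

/-- generalized matAbs -/
noncomputable def gAbs (X : Matrix m m ℂ) : Matrix m m ℂ :=
  (Matrix.posSemidef_conjTranspose_mul_self X).1.eigenvectorUnitary.1 *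
    diagonal ((↑) ∘ Real.sqrt ∘ (Matrix.posSemidef_conjTranspose_mul_self X).1.eigenvalues) *
    (star (Matrix.posSemidef_conjTranspose_mul_self X).1.eigenvectorUnitary : Matrix m m ℂ)

open scoped MatrixOrder

lemma gAbs_eq_sqrt (X : Matrix m m ℂ) : gAbs X = CFC.sqrt (Xᴴ * X) := by
  have hH := (Matrix.posSemidef_conjTranspose_mul_self X)
  rw [CFC.sqrt_eq_real_sqrt _ hH.nonneg, cfcₙ_eq_cfc (hf0 := Real.sqrt_zero), hH.1.cfc_eq]
  rfl

lemma eq_gAbs_of_sq {P : Matrix m m ℂ} (hP : P.PosSemidef) (B : Matrix m m ℂ)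
    (h : P ^ 2 = Bᴴ * B) : P = gAbs B := by
  rw [gAbs_eq_sqrt]
  exact (CFC.sqrt_unique (by rw [← pow_two]; exact h) hP.nonneg).symm

lemma gAbs_posSemidef (X : Matrix m m ℂ) : (gAbs X).PosSemidef :=
  by rw [gAbs_eq_sqrt]; exact (CFC.sqrt_nonneg _).posSemidef

lemma gAbs_mul_self (X : Matrix m m ℂ) : gAbs X * gAbs X = Xᴴ * X :=
  by rw [gAbs_eq_sqrt]; exact CFC.sqrt_mul_sqrt_self _ (Matrix.posSemidef_conjTranspose_mul_self X).nonneg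

lemma trace_re_nonneg {M : Matrix m m ℂ} (hM : M.PosSemidef) : 0 ≤ (Matrix.trace M).re := by
  rw [Matrix.trace, Complex.re_sum]
  refine Finset.sum_nonneg fun i _ => ?_
  have := hM.re_dotProduct_nonneg (Pi.single i 1)
  simpa [Matrix.diag, dotProduct, Pi.single_apply, Matrix.mulVec_single] using this

lemma trace_mul_re_nonneg {P Q : Matrix m m ℂ} (hP : P.PosSemidef) (hQ : Q.PosSemidef) :
    0 ≤ (Matrix.trace (P * Q)).re := by
  have hS := (CFC.sqrt_nonneg P).posSemidef
  have h1 : P * Q = CFC.sqrt P * (CFC.sqrt P * Q) := by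
    rw [← Matrix.mul_assoc, CFC.sqrt_mul_sqrt_self P hP.nonneg]
  have h2 : Matrix.trace (P * Q) = Matrix.trace (CFC.sqrt P * Q * CFC.sqrt P) := by
    rw [h1, Matrix.trace_mul_comm, Matrix.mul_assoc]
  rw [h2]
  have : (CFC.sqrt P * Q * (CFC.sqrt P)ᴴ).PosSemidef := hQ.mul_mul_conjTranspose_same (CFC.sqrt P)
  rw [hS.1] at this
  exact trace_re_nonneg this

section jp

variable {A : Matrix m m ℂ} (hA : A.IsHermitian)

/-- diagonal conjugation functional calculus -/
noncomputable def jp (g : ℝ → ℝ) : Matrix m m ℂ :=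
  (hA.eigenvectorUnitary : Matrix m m ℂ) *
    diagonal (Complex.ofReal ∘ g ∘ hA.eigenvalues) *
    (star (hA.eigenvectorUnitary : Matrix m m ℂ))

lemma jp_mul (g g' : ℝ → ℝ) : jp hA g * jp hA g' = jp hA (fun x => g x * g' x) := by
  have hU : (star (hA.eigenvectorUnitary : Matrix m m ℂ)) *
      (hA.eigenvectorUnitary : Matrix m m ℂ) = 1 := by
    simp
  have hD : diagonal (Complex.ofReal ∘ g ∘ hA.eigenvalues) *
      diagonal (Complex.ofReal ∘ g' ∘ hA.eigenvalues) =
      diagonal (Complex.ofReal ∘ (fun x => g x * g' x) ∘ hA.eigenvalues) := by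
    rw [diagonal_mul_diagonal]; exact congrArg Matrix.diagonal (funext fun i => by simp)
  have hU3 : (star (hA.eigenvectorUnitary : Matrix m m ℂ)) *
      ((hA.eigenvectorUnitary : Matrix m m ℂ) *
        (diagonal (Complex.ofReal ∘ g' ∘ hA.eigenvalues) *
          (star (hA.eigenvectorUnitary : Matrix m m ℂ)))) =
      diagonal (Complex.ofReal ∘ g' ∘ hA.eigenvalues) *
        (star (hA.eigenvectorUnitary : Matrix m m ℂ)) := by
    rw [← Matrix.mul_assoc, hU, Matrix.one_mul]
  have hD2 : diagonal (Complex.ofReal ∘ g ∘ hA.eigenvalues) *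
      (diagonal (Complex.ofReal ∘ g' ∘ hA.eigenvalues) *
        (star (hA.eigenvectorUnitary : Matrix m m ℂ))) =
      diagonal (Complex.ofReal ∘ (fun x => g x * g' x) ∘ hA.eigenvalues) *
        (star (hA.eigenvectorUnitary : Matrix m m ℂ)) := by
    rw [← Matrix.mul_assoc, hD]
  unfold jp
  simp only [Matrix.mul_assoc]
  rw [hU3, hD2]

lemma jp_add (g g' : ℝ → ℝ) : jp hA g + jp hA g' = jp hA (fun x => g x + g' x) := by
  have hD : diagonal (Complex.ofReal ∘ g ∘ hA.eigenvalues) +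
      diagonal (Complex.ofReal ∘ g' ∘ hA.eigenvalues) =
      diagonal (Complex.ofReal ∘ (fun x => g x + g' x) ∘ hA.eigenvalues) := by
    rw [diagonal_add]; exact congrArg Matrix.diagonal (funext fun i => by simp)
  unfold jp
  rw [← Matrix.add_mul, ← Matrix.mul_add, hD]

lemma jp_sub (g g' : ℝ → ℝ) : jp hA g - jp hA g' = jp hA (fun x => g x - g' x) := by
  have hD : diagonal (Complex.ofReal ∘ g ∘ hA.eigenvalues) -
      diagonal (Complex.ofReal ∘ g' ∘ hA.eigenvalues) =
      diagonal (Complex.ofReal ∘ (fun x => g x - g' x) ∘ hA.eigenvalues) := by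
    rw [diagonal_sub]; exact congrArg Matrix.diagonal (funext fun i => by simp)
  unfold jp
  rw [← Matrix.sub_mul, ← Matrix.mul_sub, hD]

lemma jp_id : jp hA (fun x => x) = A := by
  rw [jp]; exact (hA.spectral_theorem).symm

lemma jp_posSemidef {g : ℝ → ℝ} (hg : ∀ x, 0 ≤ g x) : (jp hA g).PosSemidef := by
  have hd : (Matrix.diagonal (Complex.ofReal ∘ g ∘ hA.eigenvalues)).PosSemidef := by
    refine Matrix.PosSemidef.diagonal fun i => ?_
    simpa using Complex.zero_le_real.mpr (hg _)
  have := hd.mul_mul_conjTranspose_same (hA.eigenvectorUnitary : Matrix m m ℂ)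
  simpa [jp, Matrix.star_eq_conjTranspose] using this

lemma gAbs_eq_jp : gAbs A = jp hA (fun x => |x|) := by
  symm
  refine eq_gAbs_of_sq (jp_posSemidef hA fun x => abs_nonneg x) _ ?_
  rw [pow_two, jp_mul]
  have hfe : (fun x : ℝ => |x| * |x|) = fun x : ℝ => x * x :=
    funext fun x => abs_mul_abs_self x
  rw [hfe, ← jp_mul, jp_id, hA.eq]

/-- Key Hermitian trace inequality: Tr(AB) ≤ Tr(|A||B|). -/
lemma herm_key {A B : Matrix m m ℂ} (hA : A.IsHermitian) (hB : B.IsHermitian) :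
    (Matrix.trace (A * B)).re ≤ (Matrix.trace (gAbs A * gAbs B)).re := by
  set AP := jp hA (fun x => x⁺) with hAP
  set AN := jp hA (fun x => x⁻) with hAN
  set BP := jp hB (fun x => x⁺) with hBP
  set BN := jp hB (fun x => x⁻) with hBN
  have hApsd : AP.PosSemidef := jp_posSemidef hA fun x => posPart_nonneg x
  have hAnsd : AN.PosSemidef := jp_posSemidef hA fun x => negPart_nonneg x
  have hBpsd : BP.PosSemidef := jp_posSemidef hB fun x => posPart_nonneg x
  have hBnsd : BN.PosSemidef := jp_posSemidef hB fun x => negPart_nonneg x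
  have hAsub : AP - AN = A := by
    rw [hAP, hAN, jp_sub]
    have : (fun x : ℝ => x⁺ - x⁻) = fun x : ℝ => x := funext fun x => posPart_sub_negPart x
    rw [this, jp_id]
  have hBsub : BP - BN = B := by
    rw [hBP, hBN, jp_sub]
    have : (fun x : ℝ => x⁺ - x⁻) = fun x : ℝ => x := funext fun x => posPart_sub_negPart x
    rw [this, jp_id]
  have hAadd : AP + AN = gAbs A := by
    rw [hAP, hAN, jp_add, gAbs_eq_jp hA]
    have hfe : (fun x : ℝ => x⁺ + x⁻) = fun x : ℝ => |x| :=
      funext fun x => posPart_add_negPart x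
    rw [hfe]
  have hBadd : BP + BN = gAbs B := by
    rw [hBP, hBN, jp_add, gAbs_eq_jp hB]
    have hfe : (fun x : ℝ => x⁺ + x⁻) = fun x : ℝ => |x| :=
      funext fun x => posPart_add_negPart x
    rw [hfe]
  have e1 : A * B = AP * BP - AP * BN - AN * BP + AN * BN := by
    rw [← hAsub, ← hBsub]; noncomm_ring
  have e2 : gAbs A * gAbs B = AP * BP + AP * BN + AN * BP + AN * BN := by
    rw [← hAadd, ← hBadd]; noncomm_ring
  have n1 := trace_mul_re_nonneg hApsd hBnsd
  have n2 := trace_mul_re_nonneg hAnsd hBpsd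
  rw [e1, e2]
  simp only [Matrix.trace_add, Matrix.trace_sub, Complex.add_re, Complex.sub_re]
  linarith

lemma trace_fromBlocks (A : Matrix m m ℂ) (B : Matrix m m' ℂ) (C : Matrix m' m ℂ)
    (D : Matrix m' m' ℂ) :
    Matrix.trace (fromBlocks A B C D) = Matrix.trace A + Matrix.trace D := by
  simp [Matrix.trace, Matrix.diag, Fintype.sum_sum_type, fromBlocks]

lemma blockdiag_psd {P : Matrix m m ℂ} {Q : Matrix m' m' ℂ}
    (hP : P.PosSemidef) (hQ : Q.PosSemidef) :
    (fromBlocks P 0 0 Q).PosSemidef := by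
  obtain ⟨B, hB⟩ : ∃ B : Matrix m m ℂ, P = Bᴴ * B := ⟨CFC.sqrt P, by
    rw [(CFC.sqrt_nonneg P).posSemidef.1.eq, CFC.sqrt_mul_sqrt_self P hP.nonneg]⟩
  obtain ⟨C, hC⟩ : ∃ C : Matrix m' m' ℂ, Q = Cᴴ * C := ⟨CFC.sqrt Q, by
    rw [(CFC.sqrt_nonneg Q).posSemidef.1.eq, CFC.sqrt_mul_sqrt_self Q hQ.nonneg]⟩
  have : fromBlocks P 0 0 Q = (fromBlocks B 0 0 C)ᴴ * (fromBlocks B 0 0 C) := by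
    rw [fromBlocks_conjTranspose, fromBlocks_multiply]
    simp [hB, hC]
  rw [this]
  exact Matrix.posSemidef_conjTranspose_mul_self _

/-- the Hermitian dilation -/
def dil (X : Matrix m m ℂ) : Matrix (m ⊕ m) (m ⊕ m) ℂ := fromBlocks 0 Xᴴ X 0

lemma dil_isHermitian (X : Matrix m m ℂ) : (dil X).IsHermitian := by
  unfold dil Matrix.IsHermitian
  rw [fromBlocks_conjTranspose]
  simp

lemma gAbs_dil (X : Matrix m m ℂ) :
    gAbs (dil X) = fromBlocks (gAbs X) 0 0 (gAbs Xᴴ) := by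
  symm
  refine eq_gAbs_of_sq
    (blockdiag_psd (gAbs_posSemidef X) (gAbs_posSemidef Xᴴ)) _ ?_
  rw [pow_two, fromBlocks_multiply]
  have hd : (dil X)ᴴ = dil X := dil_isHermitian X
  rw [hd]
  unfold dil
  rw [fromBlocks_multiply]
  simp [gAbs_mul_self]

lemma dilation_ineq (X Y : Matrix m m ℂ) :
    2 * (Matrix.trace (Yᴴ * X)).re ≤
      (Matrix.trace (gAbs X * gAbs Y)).re + (Matrix.trace (gAbs Xᴴ * gAbs Yᴴ)).re := by
  have h := herm_key (dil_isHermitian X) (dil_isHermitian Y)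
  have h1 : dil X * dil Y = fromBlocks (Xᴴ * Y) 0 0 (X * Yᴴ) := by
    unfold dil; rw [fromBlocks_multiply]; simp
  have h2 : gAbs (dil X) * gAbs (dil Y) =
      fromBlocks (gAbs X * gAbs Y) 0 0 (gAbs Xᴴ * gAbs Yᴴ) := by
    rw [gAbs_dil, gAbs_dil, fromBlocks_multiply]; simp
  rw [h1, h2, trace_fromBlocks, trace_fromBlocks] at h
  have h3 : (Matrix.trace (Xᴴ * Y)).re = (Matrix.trace (Yᴴ * X)).re := by
    have : Xᴴ * Y = (Yᴴ * X)ᴴ := by rw [conjTranspose_mul, conjTranspose_conjTranspose]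
    rw [this, Matrix.trace_conjTranspose]
    exact Complex.conj_re _
  have h4 : Matrix.trace (X * Yᴴ) = Matrix.trace (Yᴴ * X) := Matrix.trace_mul_comm X Yᴴ
  rw [Complex.add_re, Complex.add_re, h3, h4] at h
  linarith

lemma cauchy_step (X Y : Matrix m m ℂ) :
    2 * (Matrix.trace (gAbs Xᴴ * gAbs Yᴴ)).re ≤
      (Matrix.trace (Xᴴ * X)).re + (Matrix.trace (Yᴴ * Y)).re := by
  set S := gAbs Xᴴ with hS
  set T := gAbs Yᴴ with hT
  have hSh : Sᴴ = S := (gAbs_posSemidef Xᴴ).isHermitian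
  have hTh : Tᴴ = T := (gAbs_posSemidef Yᴴ).isHermitian
  have h0 := trace_re_nonneg (Matrix.posSemidef_conjTranspose_mul_self (S - T))
  have e1 : (S - T)ᴴ * (S - T) = S * S - S * T - T * S + T * T := by
    rw [conjTranspose_sub, hSh, hTh]; noncomm_ring
  have hSS : Matrix.trace (S * S) = Matrix.trace (Xᴴ * X) := by
    rw [hS, gAbs_mul_self, conjTranspose_conjTranspose, Matrix.trace_mul_comm]
  have hTT : Matrix.trace (T * T) = Matrix.trace (Yᴴ * Y) := by
    rw [hT, gAbs_mul_self, conjTranspose_conjTranspose, Matrix.trace_mul_comm]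
  have hTS : Matrix.trace (T * S) = Matrix.trace (S * T) := Matrix.trace_mul_comm T S
  rw [e1] at h0
  simp only [Matrix.trace_add, Matrix.trace_sub, Complex.add_re, Complex.sub_re,
    hSS, hTT, hTS] at h0
  linarith

end jp

end AY

theorem stmt_14 {n : ℕ} (X Y : Matrix (Fin n) (Fin n) ℂ) :
    hsNorm (matAbs X - matAbs Y) ≤ Real.sqrt 2 * hsNorm (X - Y) := by
  have hmX : matAbs X = AY.gAbs X := rfl
  have hmY : matAbs Y = AY.gAbs Y := rfl
  set P := AY.gAbs X with hP
  set Q := AY.gAbs Y with hQ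
  set a := (Matrix.trace (Xᴴ * X)).re with ha
  set b := (Matrix.trace (Yᴴ * Y)).re with hb
  set r := (Matrix.trace (Yᴴ * X)).re with hr
  set pq := (Matrix.trace (P * Q)).re with hpq
  have hPh : Pᴴ = P := (AY.gAbs_posSemidef X).isHermitian
  have hQh : Qᴴ = Q := (AY.gAbs_posSemidef Y).isHermitian
  -- LHS squared
  have h1 : (Matrix.trace ((P - Q)ᴴ * (P - Q))).re = a + b - 2 * pq := by
    have e1 : (P - Q)ᴴ * (P - Q) = P * P - P * Q - Q * P + Q * Q := by
      rw [conjTranspose_sub, hPh, hQh]; noncomm_ring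
    have hPP : Matrix.trace (P * P) = Matrix.trace (Xᴴ * X) := by
      rw [hP, AY.gAbs_mul_self]
    have hQQ : Matrix.trace (Q * Q) = Matrix.trace (Yᴴ * Y) := by
      rw [hQ, AY.gAbs_mul_self]
    have hQP : Matrix.trace (Q * P) = Matrix.trace (P * Q) := Matrix.trace_mul_comm Q P
    rw [e1]
    simp only [Matrix.trace_add, Matrix.trace_sub, Complex.add_re, Complex.sub_re,
      hPP, hQQ, hQP]
    ring
  -- RHS squared
  have h2 : (Matrix.trace ((X - Y)ᴴ * (X - Y))).re = a + b - 2 * r := by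
    have e1 : (X - Y)ᴴ * (X - Y) = Xᴴ * X - Xᴴ * Y - Yᴴ * X + Yᴴ * Y := by
      rw [conjTranspose_sub]; noncomm_ring
    have hXY : (Matrix.trace (Xᴴ * Y)).re = r := by
      have : Xᴴ * Y = (Yᴴ * X)ᴴ := by rw [conjTranspose_mul, conjTranspose_conjTranspose]
      rw [this, Matrix.trace_conjTranspose]
      exact Complex.conj_re _
    rw [e1]
    simp only [Matrix.trace_add, Matrix.trace_sub, Complex.add_re, Complex.sub_re, hXY]
    ring
  have key1 : 2 * r ≤ pq + (Matrix.trace (AY.gAbs Xᴴ * AY.gAbs Yᴴ)).re :=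
    AY.dilation_ineq X Y
  have key2 : 2 * (Matrix.trace (AY.gAbs Xᴴ * AY.gAbs Yᴴ)).re ≤ a + b :=
    AY.cauchy_step X Y
  unfold hsNorm
  rw [hmX, hmY, h1, h2, ← Real.sqrt_mul (by norm_num : (0:ℝ) ≤ 2)]
  exact Real.sqrt_le_sqrt (by linarith)
end
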